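/- Supremum-norm covering transfer: let μ be a probability measure, 0 < ε ≤ 1, g a nonnegative bounded function, and set f_g(x) = (√g(x)+ε)² / ∫(√g+ε)²dμ. If f is a probability density with ‖√f - √g‖_∞ ≤ ε and there exists a probability density f* with ‖√f* - √g‖_∞ ≤ ε, then ‖f/f_g‖_∞ ≤ (1+2ε)² and H*(f,f_g) ≤ 8ε, where H*(f,h)² = ∫(√f-√h)²((2/3)√(f/h)+1/3)dμ. -/

import Mathlib

open MeasureTheory Real

private lemma aux_arith17 (a b c ε : ℝ) (hε : 0 < ε) (h1 : a - b ≤ 0) (h2 : -(2*ε) ≤ a - b) :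
    (a - c) ^ 2 * (7/3) ≤ 56/3 * ε ^ 2 + 14/3 * (b - c) ^ 2 := by
  nlinarith [sq_nonneg (a - 2 * b + c),
    mul_nonneg (by linarith : (0:ℝ) ≤ a - b + 2 * ε) (by linarith : (0:ℝ) ≤ b - a),
    mul_nonneg hε.le (by linarith : (0:ℝ) ≤ a - b + 2 * ε)]

set_option maxHeartbeats 1000000 in

/-- supremum-norm covering transfer. If `‖√f-√g‖_∞ ≤ ε` and some density
`f*` also satisfies `‖√f*-√g‖_∞ ≤ ε`, then for
`f_g = (√g+ε)²/∫(√g+ε)²dμ` one has `‖f/f_g‖_∞ ≤ (1+2ε)²` and `H*(f,f_g) ≤ 8ε`. -/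
theorem sup_norm_covering_transfer
    {X : Type*} [MeasurableSpace X] (μ : Measure X) [IsProbabilityMeasure μ]
    (ε : ℝ) (hε0 : 0 < ε) (hε1 : ε ≤ 1)
    (g : X → ℝ) (hg : Measurable g) (hgnn : ∀ x, 0 ≤ g x)
    (M : ℝ) (hgbdd : ∀ x, g x ≤ M)
    (f : X → ℝ) (hf : Measurable f) (hfnn : ∀ x, 0 ≤ f x) (hf1 : ∫ x, f x ∂μ = 1)
    (hfg : ∀ x, |Real.sqrt (f x) - Real.sqrt (g x)| ≤ ε)
    (fstar : X → ℝ) (hfstar : Measurable fstar) (hfstarnn : ∀ x, 0 ≤ fstar x)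
    (hfstar1 : ∫ x, fstar x ∂μ = 1)
    (hfstarg : ∀ x, |Real.sqrt (fstar x) - Real.sqrt (g x)| ≤ ε) :
    (∀ x, f x / ((Real.sqrt (g x) + ε) ^ 2 / ∫ y, (Real.sqrt (g y) + ε) ^ 2 ∂μ) ≤
        (1 + 2 * ε) ^ 2) ∧
    Real.sqrt (∫ x, (Real.sqrt (f x) -
        Real.sqrt ((Real.sqrt (g x) + ε) ^ 2 / ∫ y, (Real.sqrt (g y) + ε) ^ 2 ∂μ)) ^ 2 *
        ((2 / 3) * Real.sqrt (f x /
          ((Real.sqrt (g x) + ε) ^ 2 / ∫ y, (Real.sqrt (g y) + ε) ^ 2 ∂μ)) + 1 / 3) ∂μ)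
      ≤ 8 * ε := by
  have hkey : ∀ (φ : X → ℝ) (C : ℝ), Measurable φ → (∀ x, |φ x| ≤ C) →
      Integrable φ μ := fun φ C hm hb =>
    (integrable_const C).mono' hm.aestronglyMeasurable (ae_of_all _ hb)
  set sM := Real.sqrt (max M 0) with hsMdef
  have hsM0 : 0 ≤ sM := Real.sqrt_nonneg _
  have hgK : ∀ x, Real.sqrt (g x) ≤ sM := fun x =>
    Real.sqrt_le_sqrt (le_max_of_le_left (hgbdd x))
  have hbnn : ∀ x, 0 ≤ Real.sqrt (g x) + ε := fun x => by
    have := Real.sqrt_nonneg (g x); linarith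
  have hbK : ∀ x, Real.sqrt (g x) + ε ≤ sM + 1 := fun x => by
    have := hgK x; linarith
  have hbmeas : Measurable fun x => Real.sqrt (g x) + ε := hg.sqrt.add_const ε
  have hfb : ∀ x, Real.sqrt (f x) ≤ Real.sqrt (g x) + ε := fun x => by
    have := abs_le.1 (hfg x); linarith [this.2]
  have hfb2 : ∀ x, f x ≤ (Real.sqrt (g x) + ε) ^ 2 := fun x => by
    nlinarith [Real.sq_sqrt (hfnn x), Real.sqrt_nonneg (f x), hfb x, hbnn x]
  have int_b2 : Integrable (fun x => (Real.sqrt (g x) + ε) ^ 2) μ := by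
    refine hkey _ ((sM + 1) ^ 2) (hbmeas.pow_const 2) (fun x => ?_)
    rw [abs_of_nonneg (sq_nonneg _)]
    nlinarith [hbnn x, hbK x]
  set N := ∫ y, (Real.sqrt (g y) + ε) ^ 2 ∂μ with hNdef
  have hN1 : 1 ≤ N := by
    rw [← hf1]
    exact integral_mono_of_nonneg (ae_of_all _ hfnn) int_b2 (ae_of_all _ hfb2)
  have int_fstar : Integrable fstar μ := by
    refine hkey _ ((sM + 1) ^ 2) hfstar (fun x => ?_)
    rw [abs_of_nonneg (hfstarnn x)]
    have h1 := abs_le.1 (hfstarg x)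
    nlinarith [Real.sq_sqrt (hfstarnn x), Real.sqrt_nonneg (fstar x), hgK x, hε0, hε1]
  have hNle : N ≤ (1 + 2 * ε) ^ 2 := by
    have hptw : ∀ x, (Real.sqrt (g x) + ε) ^ 2 ≤
        (1 + 2 * ε) * fstar x + (2 * ε + 4 * ε ^ 2) := fun x => by
      have h1 := abs_le.1 (hfstarg x)
      nlinarith [Real.sq_sqrt (hfstarnn x), Real.sqrt_nonneg (fstar x),
        Real.sqrt_nonneg (g x), hε0,
        mul_nonneg hε0.le (sq_nonneg (Real.sqrt (fstar x) - 1)),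
        mul_nonneg (by linarith [h1.2] : (0:ℝ) ≤ Real.sqrt (fstar x) + ε - Real.sqrt (g x))
          (by linarith [Real.sqrt_nonneg (fstar x), Real.sqrt_nonneg (g x)] :
            (0:ℝ) ≤ Real.sqrt (fstar x) + Real.sqrt (g x) + 3 * ε)]
    calc N ≤ ∫ x, ((1 + 2 * ε) * fstar x + (2 * ε + 4 * ε ^ 2)) ∂μ :=
          integral_mono_of_nonneg (ae_of_all _ fun x => sq_nonneg _)
            ((int_fstar.const_mul _).add (integrable_const _)) (ae_of_all _ hptw)
      _ = (1 + 2 * ε) * 1 + (2 * ε + 4 * ε ^ 2) := by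
          rw [integral_add (int_fstar.const_mul _) (integrable_const _),
            integral_const_mul, hfstar1, integral_const]
          simp
      _ = (1 + 2 * ε) ^ 2 := by ring
  have hN0 : (0:ℝ) < N := by linarith
  have part1 : ∀ x, f x / ((Real.sqrt (g x) + ε) ^ 2 / N) ≤ (1 + 2 * ε) ^ 2 := by
    intro x
    have hbp : (0:ℝ) < (Real.sqrt (g x) + ε) ^ 2 := by
      have := Real.sqrt_nonneg (g x); nlinarith
    rw [div_div_eq_mul_div, div_le_iff₀ hbp]
    nlinarith [hfb2 x, hfnn x, sq_nonneg (Real.sqrt (g x) + ε)]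
  refine ⟨part1, ?_⟩
  -- Part 2
  have hsN2 : Real.sqrt N ^ 2 = N := Real.sq_sqrt hN0.le
  have hsN1 : 1 ≤ Real.sqrt N := by
    have := Real.sqrt_le_sqrt hN1
    rwa [Real.sqrt_one] at this
  have hsNle : Real.sqrt N ≤ 1 + 2 * ε := by
    have := Real.sqrt_le_sqrt hNle
    rwa [Real.sqrt_sq (by linarith : (0:ℝ) ≤ 1 + 2 * ε)] at this
  have hsNpos : (0:ℝ) < Real.sqrt N := by linarith
  have hc : ∀ x, Real.sqrt ((Real.sqrt (g x) + ε) ^ 2 / N) =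
      (Real.sqrt (g x) + ε) / Real.sqrt N := fun x => by
    rw [Real.sqrt_div (sq_nonneg _), Real.sqrt_sq (hbnn x)]
  have hwb : ∀ x, (2:ℝ)/3 * Real.sqrt (f x / ((Real.sqrt (g x) + ε) ^ 2 / N)) + 1/3
      ≤ 7/3 := fun x => by
    have h1 : Real.sqrt (f x / ((Real.sqrt (g x) + ε) ^ 2 / N)) ≤ 1 + 2 * ε := by
      have := Real.sqrt_le_sqrt (part1 x)
      rwa [Real.sqrt_sq (by linarith : (0:ℝ) ≤ 1 + 2 * ε)] at this
    linarith
  have hpt : ∀ x, (Real.sqrt (f x) -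
      Real.sqrt ((Real.sqrt (g x) + ε) ^ 2 / N)) ^ 2 *
      ((2:ℝ)/3 * Real.sqrt (f x / ((Real.sqrt (g x) + ε) ^ 2 / N)) + 1/3)
      ≤ 56/3 * ε ^ 2 + 14/3 *
        ((Real.sqrt (g x) + ε) - (Real.sqrt (g x) + ε) / Real.sqrt N) ^ 2 := by
    intro x
    rw [hc x]
    have step1 : (Real.sqrt (f x) - (Real.sqrt (g x) + ε) / Real.sqrt N) ^ 2 *
        ((2:ℝ)/3 * Real.sqrt (f x / ((Real.sqrt (g x) + ε) ^ 2 / N)) + 1/3)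
        ≤ (Real.sqrt (f x) - (Real.sqrt (g x) + ε) / Real.sqrt N) ^ 2 * (7/3) :=
      mul_le_mul_of_nonneg_left (hwb x) (sq_nonneg _)
    refine le_trans step1 ?_
    have hab := abs_le.1 (hfg x)
    exact aux_arith17 _ _ _ _ hε0 (by linarith [hab.2]) (by linarith [hab.1])
  have int_bc : Integrable
      (fun x => ((Real.sqrt (g x) + ε) - (Real.sqrt (g x) + ε) / Real.sqrt N) ^ 2) μ := by
    refine hkey _ ((sM + 1) ^ 2) ((hbmeas.sub (hbmeas.div_const _)).pow_const 2)
      (fun x => ?_)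
    rw [abs_of_nonneg (sq_nonneg _)]
    have hd1 : 0 ≤ (Real.sqrt (g x) + ε) / Real.sqrt N := div_nonneg (hbnn x) hsNpos.le
    have hd2 : (Real.sqrt (g x) + ε) / Real.sqrt N ≤ Real.sqrt (g x) + ε :=
      div_le_self (hbnn x) hsN1
    nlinarith [hbnn x, hbK x]
  have int_m : Integrable (fun x => 56/3 * ε ^ 2 + 14/3 *
      ((Real.sqrt (g x) + ε) - (Real.sqrt (g x) + ε) / Real.sqrt N) ^ 2) μ :=
    (integrable_const _).add (int_bc.const_mul _)
  have hJ : ∫ x, ((Real.sqrt (g x) + ε) - (Real.sqrt (g x) + ε) / Real.sqrt N) ^ 2 ∂μ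
      = (Real.sqrt N - 1) ^ 2 := by
    have hrw : ∀ x, ((Real.sqrt (g x) + ε) - (Real.sqrt (g x) + ε) / Real.sqrt N) ^ 2
        = ((Real.sqrt N - 1) / Real.sqrt N) ^ 2 * (Real.sqrt (g x) + ε) ^ 2 := fun x => by
      field_simp
    simp only [hrw]
    rw [integral_const_mul, ← hNdef, div_pow, hsN2, div_mul_cancel₀ _ (ne_of_gt hN0)]
  have hI : (∫ x, (Real.sqrt (f x) -
      Real.sqrt ((Real.sqrt (g x) + ε) ^ 2 / N)) ^ 2 *
      ((2:ℝ)/3 * Real.sqrt (f x / ((Real.sqrt (g x) + ε) ^ 2 / N)) + 1/3) ∂μ)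
      ≤ 64 * ε ^ 2 := by
    have step : (∫ x, (Real.sqrt (f x) -
        Real.sqrt ((Real.sqrt (g x) + ε) ^ 2 / N)) ^ 2 *
        ((2:ℝ)/3 * Real.sqrt (f x / ((Real.sqrt (g x) + ε) ^ 2 / N)) + 1/3) ∂μ)
        ≤ ∫ x, (56/3 * ε ^ 2 + 14/3 *
          ((Real.sqrt (g x) + ε) - (Real.sqrt (g x) + ε) / Real.sqrt N) ^ 2) ∂μ := by
      refine integral_mono_of_nonneg (ae_of_all _ fun x => ?_) int_m (ae_of_all _ hpt)
      exact mul_nonneg (sq_nonneg _) (by positivity)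
    have heq : (∫ x, (56/3 * ε ^ 2 + 14/3 *
        ((Real.sqrt (g x) + ε) - (Real.sqrt (g x) + ε) / Real.sqrt N) ^ 2) ∂μ)
        = 56/3 * ε ^ 2 + 14/3 * (Real.sqrt N - 1) ^ 2 := by
      rw [integral_add (integrable_const _) (int_bc.const_mul _), integral_const,
        integral_const_mul, hJ]
      simp
    rw [heq] at step
    have h4 : (Real.sqrt N - 1) ^ 2 ≤ 4 * ε ^ 2 := by nlinarith
    nlinarith [sq_nonneg ε]
  calc Real.sqrt (∫ x, (Real.sqrt (f x) -
        Real.sqrt ((Real.sqrt (g x) + ε) ^ 2 / N)) ^ 2 *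
        ((2:ℝ)/3 * Real.sqrt (f x / ((Real.sqrt (g x) + ε) ^ 2 / N)) + 1/3) ∂μ)
      ≤ Real.sqrt (64 * ε ^ 2) := Real.sqrt_le_sqrt hI
    _ = 8 * ε := by
        rw [show (64:ℝ) * ε ^ 2 = (8 * ε) ^ 2 by ring, Real.sqrt_sq (by linarith)]
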